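/- arXiv:0803.1612 — 2 statements merged into one kernel-verified Lean document; each statement's English description precedes it below -/
import Mathlib

section
/- The map from the free group on two generators to GL(2, ℛ) sending the generators to M₁ and M₂ factors through the free metabelian group of rank 2; i.e., the group F(ℛ) = ⟨M₁, M₂⟩ is metabelian (its commutator subgroup is abelian). -/
open Matrix Finset

noncomputable section

/-- The Laurent polynomial ring `ℛ = ℤ[x, x⁻¹, y, y⁻¹]`, realized as the group
algebra of `ℤ × ℤ` over `ℤ`. -/
abbrev R2 : Type := AddMonoidAlgebra ℤ (ℤ × ℤ)

/-- The positive units `x^i y^j` of `ℛ`, as a homomorphism from `ℤ × ℤ`. -/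
def U : Multiplicative (ℤ × ℤ) →* R2ˣ :=
  (Units.map (AddMonoidAlgebra.of ℤ (ℤ × ℤ))).comp toUnits.toMonoidHom

/-- `x` as a unit of `ℛ`. -/
def xu : R2ˣ := U (Multiplicative.ofAdd (1, 0))
/-- `y` as a unit of `ℛ`. -/
def yu : R2ˣ := U (Multiplicative.ofAdd (0, 1))
/-- `x ∈ ℛ`. -/
def Xr : R2 := xu
/-- `y ∈ ℛ`. -/
def Yr : R2 := yu

/-- The augmentation map `ℛ → ℤ`, `x, y ↦ 1`. -/
def aug : R2 →+* ℤ := ((AddMonoidAlgebra.lift ℤ ℤ (ℤ × ℤ)) 1).toRingHom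

/-- The augmentation ideal `Σ` of `ℛ`. -/
def Saug : Ideal R2 := RingHom.ker aug

/-- The `n`-cyclotomic ideal `𝒥(n)` of `ℛ`, generated by `1 + u + ⋯ + u^(n-1)` for
positive units `u`. -/
def Cyc (n : ℕ) : Ideal R2 :=
  Ideal.span {r | ∃ m : Multiplicative (ℤ × ℤ), r = ∑ i ∈ Finset.range n, ((U m : R2)) ^ i}

/-- The matrix `M₁`. -/
def M1 : Matrix (Fin 2) (Fin 2) R2 := !![1, 1 - Yr; 0, Xr]
/-- The matrix `M₂`. -/
def M2 : Matrix (Fin 2) (Fin 2) R2 := !![Yr, 0; 1 - Xr, 1]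

/-- The matrix `[λᵢ v]` with rows `λᵢ • (1-x, 1-y)`. -/
def Nmat (a b : R2) : Matrix (Fin 2) (Fin 2) R2 :=
  !![a * (1 - Xr), a * (1 - Yr); b * (1 - Xr), b * (1 - Yr)]

/-- The row vector `v = (1-x, 1-y)`. -/
def vv : Fin 2 → R2 := ![1 - Xr, 1 - Yr]

end

noncomputable section

/-- The column vector `u = (1-y, x-1)`, a common eigenvector of `M₁` and `M₂`
(with eigenvalues `x` resp. `y`). -/
def uu : Fin 2 → R2 := ![1 - Yr, Xr - 1]

end

lemma hXne : (1 : R2) - Xr ≠ 0 := by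
  have hX : Xr = AddMonoidAlgebra.single ((1:ℤ),(0:ℤ)) (1:ℤ) := by
    simp [Xr, xu, U, AddMonoidAlgebra.of_apply]
  intro h
  rw [hX, AddMonoidAlgebra.one_def, sub_eq_zero] at h
  have := AddMonoidAlgebra.single_inj.mp h
  simp [Prod.ext_iff] at this

lemma hYne : (1 : R2) - Yr ≠ 0 := by
  have hY : Yr = AddMonoidAlgebra.single ((0:ℤ),(1:ℤ)) (1:ℤ) := by
    simp [Yr, yu, U, AddMonoidAlgebra.of_apply]
  intro h
  rw [hY, AddMonoidAlgebra.one_def, sub_eq_zero] at h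
  have := AddMonoidAlgebra.single_inj.mp h
  simp [Prod.ext_iff] at this

/-- Two matrices fixing the row vector `vv` and the column vector `uu` commute. -/
lemma key_commute (A B : Matrix (Fin 2) (Fin 2) R2)
    (hA1 : vv ᵥ* A = vv) (hA2 : A *ᵥ uu = uu)
    (hB1 : vv ᵥ* B = vv) (hB2 : B *ᵥ uu = uu) :
    A * B = B * A := by
  have eA1 := congrFun hA1 0
  have eA2 := congrFun hA1 1
  have eA3 := congrFun hA2 0
  have eB1 := congrFun hB1 0
  have eB2 := congrFun hB1 1
  have eB3 := congrFun hB2 0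
  simp only [vv, uu, vecMul, mulVec, dotProduct, Fin.sum_univ_two,
    Matrix.cons_val_zero, Matrix.cons_val_one, Matrix.head_cons] at eA1 eA2 eA3 eB1 eB2 eB3
  have Pb : ((1:R2)-Xr) * A 0 1 = ((1:R2)-Yr) * (A 0 0 - 1) := by linear_combination -eA3
  have Pc : ((1:R2)-Yr) * A 1 0 = -(((1:R2)-Xr) * (A 0 0 - 1)) := by linear_combination eA1
  have Pd : A 1 1 = 2 - A 0 0 := by
    have h2 : ((1:R2)-Yr) * (A 0 0 - 1) = ((1:R2)-Yr) * (1 - A 1 1) := by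
      linear_combination eA3 + eA2
    have h3 := mul_left_cancel₀ hYne h2
    linear_combination h3
  have Pb' : ((1:R2)-Xr) * B 0 1 = ((1:R2)-Yr) * (B 0 0 - 1) := by linear_combination -eB3
  have Pc' : ((1:R2)-Yr) * B 1 0 = -(((1:R2)-Xr) * (B 0 0 - 1)) := by linear_combination eB1
  have Pd' : B 1 1 = 2 - B 0 0 := by
    have h2 : ((1:R2)-Yr) * (B 0 0 - 1) = ((1:R2)-Yr) * (1 - B 1 1) := by
      linear_combination eB3 + eB2
    have h3 := mul_left_cancel₀ hYne h2
    linear_combination h3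
  have hXY : ((1:R2)-Xr) * ((1:R2)-Yr) ≠ 0 := mul_ne_zero hXne hYne
  ext i j : 1
  fin_cases i <;> fin_cases j <;>
    simp only [Matrix.mul_apply, Fin.sum_univ_two, Fin.isValue, Matrix.cons_val_zero,
      Matrix.cons_val_one, Matrix.head_cons]
  · have h : ((1:R2)-Xr) * ((1:R2)-Yr) * (A 0 0 * B 0 0 + A 0 1 * B 1 0)
        = ((1:R2)-Xr) * ((1:R2)-Yr) * (B 0 0 * A 0 0 + B 0 1 * A 1 0) := by
      linear_combination (((1:R2)-Yr) * B 1 0) * Pb + (((1:R2)-Yr) * (A 0 0 - 1)) * Pc'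
        - (((1:R2)-Yr) * A 1 0) * Pb' - (((1:R2)-Yr) * (B 0 0 - 1)) * Pc
    exact mul_left_cancel₀ hXY h
  · have h : ((1:R2)-Xr) * (A 0 0 * B 0 1 + A 0 1 * B 1 1)
        = ((1:R2)-Xr) * (B 0 0 * A 0 1 + B 0 1 * A 1 1) := by
      linear_combination (B 1 1 - B 0 0) * Pb + (A 0 0 - A 1 1) * Pb'
        + (((1:R2)-Yr) * (A 0 0 - 1)) * Pd' - (((1:R2)-Yr) * (B 0 0 - 1)) * Pd
    exact mul_left_cancel₀ hXne h
  · have h : ((1:R2)-Yr) * (A 1 0 * B 0 0 + A 1 1 * B 1 0)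
        = ((1:R2)-Yr) * (B 1 0 * A 0 0 + B 1 1 * A 1 0) := by
      linear_combination (B 0 0 - B 1 1) * Pc + (A 1 1 - A 0 0) * Pc'
        + (((1:R2)-Xr) * (A 0 0 - 1)) * Pd' - (((1:R2)-Xr) * (B 0 0 - 1)) * Pd
    exact mul_left_cancel₀ hYne h
  · have h : ((1:R2)-Xr) * ((1:R2)-Yr) * (A 1 0 * B 0 1 + A 1 1 * B 1 1)
        = ((1:R2)-Xr) * ((1:R2)-Yr) * (B 1 0 * A 0 1 + B 1 1 * A 1 1) := by
      linear_combination -((((1:R2)-Yr) * B 1 0) * Pb) - (((1:R2)-Yr) * (A 0 0 - 1)) * Pc'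
        + (((1:R2)-Yr) * A 1 0) * Pb' + (((1:R2)-Yr) * (B 0 0 - 1)) * Pc
    exact mul_left_cancel₀ hXY h

lemma vv_M1 : vv ᵥ* M1 = vv := by
  funext j; fin_cases j <;>
    simp [vv, M1, vecMul, dotProduct, Fin.sum_univ_two] <;> ring

lemma vv_M2 : vv ᵥ* M2 = vv := by
  funext j; fin_cases j <;>
    simp [vv, M2, vecMul, dotProduct, Fin.sum_univ_two] <;> ring

lemma M1_uu : M1 *ᵥ uu = (Xr : R2) • uu := by
  funext i; fin_cases i <;>
    simp [uu, M1, mulVec, dotProduct, Fin.sum_univ_two, Xr, smul_eq_mul] <;> ring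

lemma M2_uu : M2 *ᵥ uu = (Yr : R2) • uu := by
  funext i; fin_cases i <;>
    simp [uu, M2, mulVec, dotProduct, Fin.sum_univ_two, Yr, smul_eq_mul] <;> ring

/-- If `z` scales `uu` by the unit `d`, then `z⁻¹` scales `uu` by `d⁻¹`. -/
lemma inv_smul_uu (z : (Matrix (Fin 2) (Fin 2) R2)ˣ) (d : R2ˣ)
    (hd : (z : Matrix (Fin 2) (Fin 2) R2) *ᵥ uu = (d : R2) • uu) :
    (↑z⁻¹ : Matrix (Fin 2) (Fin 2) R2) *ᵥ uu = ((d⁻¹ : R2ˣ) : R2) • uu := by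
  have h : (↑z⁻¹ : Matrix (Fin 2) (Fin 2) R2) *ᵥ ((z : Matrix (Fin 2) (Fin 2) R2) *ᵥ uu) = uu := by
    rw [Matrix.mulVec_mulVec, ← Units.val_mul, inv_mul_cancel, Units.val_one, Matrix.one_mulVec]
  rw [hd, Matrix.mulVec_smul] at h
  calc (↑z⁻¹ : Matrix (Fin 2) (Fin 2) R2) *ᵥ uu
      = ((d⁻¹ : R2ˣ) : R2) • ((d : R2) • ((↑z⁻¹ : Matrix (Fin 2) (Fin 2) R2) *ᵥ uu)) := by
        rw [smul_smul, ← Units.val_mul, inv_mul_cancel, Units.val_one, one_smul]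
    _ = ((d⁻¹ : R2ˣ) : R2) • uu := by rw [h]

lemma vv_closure (m1 m2 : (Matrix (Fin 2) (Fin 2) R2)ˣ)
    (h1 : (m1 : Matrix (Fin 2) (Fin 2) R2) = M1)
    (h2 : (m2 : Matrix (Fin 2) (Fin 2) R2) = M2) :
    ∀ g ∈ Subgroup.closure {m1, m2}, vv ᵥ* (g : Matrix (Fin 2) (Fin 2) R2) = vv := by
  intro g hg
  induction hg using Subgroup.closure_induction with
  | mem z hz =>
    rcases hz with rfl | rfl
    · rw [h1]; exact vv_M1
    · rw [h2]; exact vv_M2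
  | one => simp
  | mul z w _ _ hz hw => rw [Units.val_mul, ← Matrix.vecMul_vecMul, hz, hw]
  | inv z _ hz =>
    have h : vv ᵥ* ((z : Matrix (Fin 2) (Fin 2) R2) * (↑z⁻¹ : Matrix (Fin 2) (Fin 2) R2)) = vv := by
      rw [← Units.val_mul, mul_inv_cancel, Units.val_one, Matrix.vecMul_one]
    rw [← Matrix.vecMul_vecMul, hz] at h
    exact h

lemma uu_closure (m1 m2 : (Matrix (Fin 2) (Fin 2) R2)ˣ)
    (h1 : (m1 : Matrix (Fin 2) (Fin 2) R2) = M1)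
    (h2 : (m2 : Matrix (Fin 2) (Fin 2) R2) = M2) :
    ∀ g ∈ Subgroup.closure {m1, m2}, ∃ d : R2ˣ,
      (g : Matrix (Fin 2) (Fin 2) R2) *ᵥ uu = (d : R2) • uu := by
  intro g hg
  induction hg using Subgroup.closure_induction with
  | mem z hz =>
    rcases hz with rfl | rfl
    · exact ⟨xu, by rw [h1]; exact M1_uu⟩
    · exact ⟨yu, by rw [h2]; exact M2_uu⟩
  | one => exact ⟨1, by simp⟩
  | mul z w _ _ hz hw =>
    obtain ⟨d1, hd1⟩ := hz; obtain ⟨d2, hd2⟩ := hw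
    refine ⟨d1 * d2, ?_⟩
    rw [Units.val_mul, ← Matrix.mulVec_mulVec, hd2, Matrix.mulVec_smul, hd1,
      smul_smul, Units.val_mul, mul_comm (d1 : R2) (d2 : R2)]
  | inv z _ hz =>
    obtain ⟨d, hd⟩ := hz
    exact ⟨d⁻¹, inv_smul_uu z d hd⟩

/-- The subgroup of invertible matrices fixing both `vv` (on the right) and `uu`
(on the left). -/
noncomputable def Kfix : Subgroup (Matrix (Fin 2) (Fin 2) R2)ˣ where
  carrier := {g | vv ᵥ* (g : Matrix (Fin 2) (Fin 2) R2) = vv ∧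
    (g : Matrix (Fin 2) (Fin 2) R2) *ᵥ uu = uu}
  one_mem' := by simp; funext i; fin_cases i <;> rfl
  mul_mem' := by
    rintro a b ⟨ha1, ha2⟩ ⟨hb1, hb2⟩
    constructor
    · rw [Units.val_mul, ← Matrix.vecMul_vecMul, ha1, hb1]
    · rw [Units.val_mul, ← Matrix.mulVec_mulVec, hb2, ha2]
  inv_mem' := by
    rintro a ⟨ha1, ha2⟩
    constructor
    · have h : vv ᵥ* ((a : Matrix (Fin 2) (Fin 2) R2) * (↑a⁻¹ : Matrix (Fin 2) (Fin 2) R2)) = vv := by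
        rw [← Units.val_mul, mul_inv_cancel, Units.val_one, Matrix.vecMul_one]
      rw [← Matrix.vecMul_vecMul, ha1] at h
      exact h
    · have h := inv_smul_uu a 1 (by simpa using ha2)
      simpa using h

open scoped commutatorElement

/-- The group `F(ℛ) = ⟨M₁, M₂⟩` is metabelian: its commutator subgroup is abelian.
(Hence the map from the free group on two generators sending the generators to
`M₁, M₂` factors through the free metabelian group of rank 2.) -/
theorem FR_metabelian
    (m1 m2 : (Matrix (Fin 2) (Fin 2) R2)ˣ)
    (h1 : (m1 : Matrix (Fin 2) (Fin 2) R2) = M1)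
    (h2 : (m2 : Matrix (Fin 2) (Fin 2) R2) = M2) :
    ∀ g ∈ ⁅Subgroup.closure {m1, m2}, Subgroup.closure {m1, m2}⁆,
      ∀ h ∈ ⁅Subgroup.closure {m1, m2}, Subgroup.closure {m1, m2}⁆,
        Commute g h := by
  have hle : ⁅Subgroup.closure {m1, m2}, Subgroup.closure {m1, m2}⁆ ≤ Kfix := by
    rw [Subgroup.commutator_le]
    intro a ha b hb
    obtain ⟨da, hda⟩ := uu_closure m1 m2 h1 h2 a ha
    obtain ⟨db, hdb⟩ := uu_closure m1 m2 h1 h2 b hb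
    have hamem : ⁅a, b⁆ ∈ Subgroup.closure {m1, m2} := by
      rw [commutatorElement_def]
      exact mul_mem (mul_mem (mul_mem ha hb) (inv_mem ha)) (inv_mem hb)
    refine ⟨vv_closure m1 m2 h1 h2 _ hamem, ?_⟩
    have ea' := inv_smul_uu a da hda
    have eb' := inv_smul_uu b db hdb
    rw [commutatorElement_def, Units.val_mul, Units.val_mul, Units.val_mul,
      ← Matrix.mulVec_mulVec, ← Matrix.mulVec_mulVec, ← Matrix.mulVec_mulVec, eb']
    simp only [Matrix.mulVec_smul]
    rw [ea']
    simp only [Matrix.mulVec_smul]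
    rw [hdb]
    simp only [Matrix.mulVec_smul]
    rw [hda, smul_smul, smul_smul, smul_smul]
    have hone : (((db⁻¹ : R2ˣ) : R2) * ((da⁻¹ : R2ˣ) : R2) * (db : R2) * (da : R2)) = 1 := by
      have e : (((db⁻¹ : R2ˣ) : R2) * ((da⁻¹ : R2ˣ) : R2) * (db : R2) * (da : R2))
          = (((db⁻¹ : R2ˣ) : R2) * (db : R2)) * (((da⁻¹ : R2ˣ) : R2) * (da : R2)) := by ring
      rw [e, ← Units.val_mul, ← Units.val_mul, inv_mul_cancel, inv_mul_cancel]
      simp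
    rw [hone, one_smul]
  intro g hg h hh
  obtain ⟨hg1, hg2⟩ := hle hg
  obtain ⟨hh1, hh2⟩ := hle hh
  have := key_commute (↑g) (↑h) hg1 hg2 hh1 hh2
  exact Units.ext (by rw [Units.val_mul, Units.val_mul, this])
end

section
/- If M = uI + N is an element of the j-th term of the lower central series of F(ℛ) (j ≥ 2), then the coefficients λ₁, λ₂ of N (with rows λᵢ·(1-x, 1-y)) lie in Σ^{j-1}, the (j-1)-st power of the augmentation ideal. -/
open Matrix Finset

/-- The lower central series of a subgroup `H`: `lcs H 0 = H = G₁` and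
`lcs H j = [H, lcs H (j-1)]`, so `lcs H (j-1)` is the `j`-th term `G_j`. -/
def lcs {G : Type*} [Group G] (H : Subgroup G) : ℕ → Subgroup G
  | 0 => H
  | j + 1 => ⁅H, lcs H j⁆

section
open Matrix
abbrev Mat := Matrix (Fin 2) (Fin 2) R2

lemma form_eq (u a b : R2) :
    u • (1:Mat) + Nmat a b
      = !![u + a*(1-Xr), a*(1-Yr); b*(1-Xr), u + b*(1-Yr)] := by
  ext i j
  fin_cases i <;> fin_cases j <;>
    simp [Nmat, Matrix.one_apply] <;> ring

lemma form_mul (u u' a b c d : R2) :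
    (u • (1:Mat) + Nmat a b) * (u' • (1:Mat) + Nmat c d)
      = (u*u') • (1:Mat) + Nmat (u*c + (u' + (1-Xr)*c + (1-Yr)*d)*a)
          (u*d + (u' + (1-Xr)*c + (1-Yr)*d)*b) := by
  rw [form_eq, form_eq, form_eq]
  ext i j : 1
  fin_cases i <;> fin_cases j <;>
    simp [Matrix.mul_apply, Fin.sum_univ_two] <;> ring

lemma form_det (u a b : R2) :
    (u • (1:Mat) + Nmat a b).det = u * (u + (1-Xr)*a + (1-Yr)*b) := by
  rw [form_eq, Matrix.det_fin_two_of]; ring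

lemma Nmat_zero : Nmat 0 0 = 0 := by
  ext i j; fin_cases i <;> fin_cases j <;> simp [Nmat]
end

section
open Matrix

lemma isUnit_w (M : Matˣ) (u : R2ˣ) (a b : R2)
    (h : (M : Mat) = (u:R2) • (1:Mat) + Nmat a b) :
    IsUnit ((u:R2) + (1-Xr)*a + (1-Yr)*b) := by
  have hd : IsUnit (M : Mat).det := (Matrix.isUnit_iff_isUnit_det _).mp M.isUnit
  rw [h, form_det] at hd
  have h2 := (u⁻¹.isUnit).mul hd
  rwa [← mul_assoc, Units.inv_mul, one_mul] at h2

lemma inv_form (M : Matˣ) (u : R2ˣ) (a b : R2)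
    (h : (M : Mat) = (u:R2) • (1:Mat) + Nmat a b) :
    ∃ z : R2,
      z * ((u:R2) * ((u:R2) + (1-Xr)*a + (1-Yr)*b)) = -1 ∧
      ((M⁻¹ : Matˣ) : Mat) = ((u⁻¹:R2ˣ):R2) • (1:Mat) + Nmat (a*z) (b*z) := by
  obtain ⟨w, hw⟩ := isUnit_w M u a b h
  set z : R2 := -(((w⁻¹:R2ˣ):R2) * ((u⁻¹:R2ˣ):R2)) with hzdef
  have hu : (u:R2) * ((u⁻¹:R2ˣ):R2) = 1 := u.mul_inv
  have hwu : ((w:R2ˣ):R2) * ((w⁻¹:R2ˣ):R2) = 1 := w.mul_inv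
  have hz : z * ((u:R2) * ((u:R2) + (1-Xr)*a + (1-Yr)*b)) = -1 := by
    rw [← hw]
    linear_combination (-(((w⁻¹:R2ˣ):R2)) * ((w:R2ˣ):R2)) * hu - hwu
  refine ⟨z, hz, ?_⟩
  set C : Mat := ((u⁻¹:R2ˣ):R2) • (1:Mat) + Nmat (a*z) (b*z) with hC
  have hMC : (M : Mat) * C = 1 := by
    rw [h, hC, form_mul]
    have hA : (u:R2)*(a*z) + (((u⁻¹:R2ˣ):R2) + (1-Xr)*(a*z) + (1-Yr)*(b*z))*a = 0 := by
      linear_combination a * ((u⁻¹:R2ˣ):R2) * hz - a * z * ((u:R2) + (1-Xr)*a + (1-Yr)*b) * hu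
    have hB : (u:R2)*(b*z) + (((u⁻¹:R2ˣ):R2) + (1-Xr)*(a*z) + (1-Yr)*(b*z))*b = 0 := by
      linear_combination b * ((u⁻¹:R2ˣ):R2) * hz - b * z * ((u:R2) + (1-Xr)*a + (1-Yr)*b) * hu
    rw [hA, hB, Nmat_zero, add_zero, hu, one_smul]
  calc ((M⁻¹ : Matˣ) : Mat) = ((M⁻¹ : Matˣ) : Mat) * ((M : Mat) * C) := by rw [hMC, mul_one]
    _ = C := by rw [← mul_assoc, Units.inv_mul, one_mul]
end

section
open Matrix

lemma mem_pow_zero (r : R2) : r ∈ Saug ^ 0 := by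
  simp [pow_zero, Ideal.one_eq_top]

noncomputable def SG (k : ℕ) : Subgroup Matˣ where
  carrier := {M | ∃ (u : R2ˣ) (a b : R2), a ∈ Saug^k ∧ b ∈ Saug^k ∧
    (M : Mat) = (u:R2) • (1:Mat) + Nmat a b}
  one_mem' := ⟨1, 0, 0, zero_mem _, zero_mem _, by
    simp [Nmat_zero]⟩
  mul_mem' := by
    rintro M N ⟨u,a,b,ha,hb,hM⟩ ⟨u',c,d,hc,hd,hN⟩
    refine ⟨u*u', (u:R2)*c + ((u':R2) + (1-Xr)*c + (1-Yr)*d)*a,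
      (u:R2)*d + ((u':R2) + (1-Xr)*c + (1-Yr)*d)*b,
      add_mem (Ideal.mul_mem_left _ _ hc) (Ideal.mul_mem_left _ _ ha),
      add_mem (Ideal.mul_mem_left _ _ hd) (Ideal.mul_mem_left _ _ hb), ?_⟩
    rw [Units.val_mul, hM, hN, form_mul, Units.val_mul]
  inv_mem' := by
    rintro M ⟨u,a,b,ha,hb,hM⟩
    obtain ⟨z, hz, hinv⟩ := inv_form M u a b hM
    exact ⟨u⁻¹, a*z, b*z, Ideal.mul_mem_right _ _ ha, Ideal.mul_mem_right _ _ hb, hinv⟩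

lemma M1_form : M1 = ((xu:R2ˣ):R2) • (1:Mat) + Nmat 1 0 := by
  rw [form_eq]
  ext i j
  fin_cases i <;> fin_cases j <;> simp [M1, Xr] <;> ring

lemma M2_form : M2 = ((yu:R2ˣ):R2) • (1:Mat) + Nmat 0 1 := by
  rw [form_eq]
  ext i j
  fin_cases i <;> fin_cases j <;> simp [M2, Yr] <;> ring

lemma closure_le_SG0 (m1 m2 : Matˣ) (h1 : (m1 : Mat) = M1) (h2 : (m2 : Mat) = M2) :
    Subgroup.closure {m1, m2} ≤ SG 0 := by
  rw [Subgroup.closure_le]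
  rintro M hM
  rcases hM with rfl | rfl
  · exact ⟨xu, 1, 0, mem_pow_zero _, mem_pow_zero _, by rw [h1, M1_form]⟩
  · exact ⟨yu, 0, 1, mem_pow_zero _, mem_pow_zero _, by rw [h2, M2_form]⟩
end

section
lemma aug_Xr : aug Xr = 1 := by
  simp [aug, Xr, xu, U]
lemma aug_Yr : aug Yr = 1 := by
  simp [aug, Yr, yu, U]
lemma oneX_mem : (1 - Xr) ∈ Saug := by
  rw [Saug, RingHom.mem_ker, map_sub, _root_.map_one, aug_Xr, sub_self]
lemma oneY_mem : (1 - Yr) ∈ Saug := by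
  rw [Saug, RingHom.mem_ker, map_sub, _root_.map_one, aug_Yr, sub_self]
lemma Xr_ne_one : Xr ≠ 1 := by
  intro h
  have h2 : Multiplicative.ofAdd ((1:ℤ),(0:ℤ)) = 1 :=
    AddMonoidAlgebra.of_injective (R := ℤ) (M := ℤ × ℤ) (by rw [_root_.map_one]; exact h)
  simpa using congrArg Multiplicative.toAdd h2
lemma Yr_ne_one : Yr ≠ 1 := by
  intro h
  have h2 : Multiplicative.ofAdd ((0:ℤ),(1:ℤ)) = 1 :=
    AddMonoidAlgebra.of_injective (R := ℤ) (M := ℤ × ℤ) (by rw [_root_.map_one]; exact h)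
  simpa using congrArg Multiplicative.toAdd h2
end

section
open Matrix
open scoped commutatorElement

lemma comm_mem (k : ℕ) (g h : Matˣ) (hg : g ∈ SG 0) (hh : h ∈ SG k) :
    ⁅g, h⁆ ∈ SG (k+1) := by
  obtain ⟨u, a, b, -, -, hgf⟩ := hg
  obtain ⟨u', c, d, hc, hd, hhf⟩ := hh
  -- products
  have hA : ((g*h : Matˣ) : Mat) = ((u:R2)*(u':R2)) • (1:Mat) +
      Nmat ((u:R2)*c + ((u':R2) + (1-Xr)*c + (1-Yr)*d)*a)
           ((u:R2)*d + ((u':R2) + (1-Xr)*c + (1-Yr)*d)*b) := by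
    rw [Units.val_mul, hgf, hhf, form_mul]
  have hB : ((h*g : Matˣ) : Mat) = ((u'*u : R2ˣ):R2) • (1:Mat) +
      Nmat ((u':R2)*a + ((u:R2) + (1-Xr)*a + (1-Yr)*b)*c)
           ((u':R2)*b + ((u:R2) + (1-Xr)*a + (1-Yr)*b)*d) := by
    rw [Units.val_mul, hhf, hgf, form_mul, Units.val_mul]
  set e1 := (u:R2)*c + ((u':R2) + (1-Xr)*c + (1-Yr)*d)*a with he1
  set e2 := (u:R2)*d + ((u':R2) + (1-Xr)*c + (1-Yr)*d)*b with he2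
  set f1 := (u':R2)*a + ((u:R2) + (1-Xr)*a + (1-Yr)*b)*c with hf1
  set f2 := (u':R2)*b + ((u:R2) + (1-Xr)*a + (1-Yr)*b)*d with hf2
  obtain ⟨z, hz, hBinv⟩ := inv_form (h*g) (u'*u) f1 f2 hB
  rw [Units.val_mul] at hz
  have hP : ((u':R2)*(u:R2)) * (((u'*u)⁻¹ : R2ˣ) : R2) = 1 := by
    rw [← Units.val_mul, Units.mul_inv]
  have hgh : ⁅g, h⁆ = (g*h)*(h*g)⁻¹ := by
    rw [commutatorElement_def]; group
  have hcomm : ((⁅g, h⁆ : Matˣ) : Mat) =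
      ((g*h : Matˣ) : Mat) * (((h*g)⁻¹ : Matˣ) : Mat) := by
    rw [hgh, Units.val_mul]
  rw [hA, hBinv, form_mul] at hcomm
  -- ideal membership facts
  have hpow : Saug * Saug^k = Saug^(k+1) := (pow_succ' Saug k).symm
  have hef1 : e1 - f1 = ((1-Xr)*(c*a) + (1-Yr)*(d*a)) - ((1-Xr)*(a*c) + (1-Yr)*(b*c)) := by
    rw [he1, hf1]; ring
  have hef2 : e2 - f2 = ((1-Xr)*(c*b) + (1-Yr)*(d*b)) - ((1-Xr)*(a*d) + (1-Yr)*(b*d)) := by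
    rw [he2, hf2]; ring
  have hmem1 : e1 - f1 ∈ Saug^(k+1) := by
    rw [hef1, ← hpow]
    exact sub_mem
      (add_mem (Ideal.mul_mem_mul oneX_mem (Ideal.mul_mem_right _ _ hc))
        (Ideal.mul_mem_mul oneY_mem (Ideal.mul_mem_right _ _ hd)))
      (add_mem (Ideal.mul_mem_mul oneX_mem (Ideal.mul_mem_left _ _ hc))
        (Ideal.mul_mem_mul oneY_mem (Ideal.mul_mem_left _ _ hc)))
  have hmem2 : e2 - f2 ∈ Saug^(k+1) := by
    rw [hef2, ← hpow]
    exact sub_mem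
      (add_mem (Ideal.mul_mem_mul oneX_mem (Ideal.mul_mem_right _ _ hc))
        (Ideal.mul_mem_mul oneY_mem (Ideal.mul_mem_right _ _ hd)))
      (add_mem (Ideal.mul_mem_mul oneX_mem (Ideal.mul_mem_left _ _ hd))
        (Ideal.mul_mem_mul oneY_mem (Ideal.mul_mem_left _ _ hd)))
  -- the coefficient identities
  have key1 : ((u:R2)*(u':R2))*(f1*z) +
      ((((u'*u)⁻¹ : R2ˣ):R2) + (1-Xr)*(f1*z) + (1-Yr)*(f2*z))*e1
      = (-((u':R2)*(u:R2)*z)) * (e1 - f1) := by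
    linear_combination e1 * (((u'*u)⁻¹ : R2ˣ):R2) * hz -
      e1 * z * ((u':R2)*(u:R2) + (1-Xr)*f1 + (1-Yr)*f2) * hP
  have key2 : ((u:R2)*(u':R2))*(f2*z) +
      ((((u'*u)⁻¹ : R2ˣ):R2) + (1-Xr)*(f1*z) + (1-Yr)*(f2*z))*e2
      = (-((u':R2)*(u:R2)*z)) * (e2 - f2) := by
    linear_combination e2 * (((u'*u)⁻¹ : R2ˣ):R2) * hz -
      e2 * z * ((u':R2)*(u:R2) + (1-Xr)*f1 + (1-Yr)*f2) * hP
  rw [key1, key2] at hcomm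
  exact ⟨u*u'*(u'*u)⁻¹, (-((u':R2)*(u:R2)*z)) * (e1 - f1), (-((u':R2)*(u:R2)*z)) * (e2 - f2),
    Ideal.mul_mem_left _ _ hmem1, Ideal.mul_mem_left _ _ hmem2,
    by rw [hcomm, Units.val_mul, Units.val_mul]⟩
end

section
open Matrix

lemma lcs_le (m1 m2 : Matˣ) (h1 : (m1 : Mat) = M1) (h2 : (m2 : Mat) = M2) :
    ∀ k : ℕ, lcs (Subgroup.closure {m1, m2}) k ≤ SG k := by
  intro k
  induction k with
  | zero => exact closure_le_SG0 m1 m2 h1 h2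
  | succ k ih =>
    show ⁅Subgroup.closure {m1, m2}, lcs (Subgroup.closure {m1, m2}) k⁆ ≤ SG (k+1)
    rw [Subgroup.commutator_le]
    intro g hg h hh
    exact comm_mem k g h (closure_le_SG0 m1 m2 h1 h2 hg) (ih hh)

lemma oneX_ne : (1 - Xr : R2) ≠ 0 := fun h => Xr_ne_one (by linear_combination -h)
lemma oneY_ne : (1 - Yr : R2) ≠ 0 := fun h => Yr_ne_one (by linear_combination -h)
end

theorem lower_central_coefficients_aux
    (m1 m2 : (Matrix (Fin 2) (Fin 2) R2)ˣ)
    (h1 : (m1 : Matrix (Fin 2) (Fin 2) R2) = M1)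
    (h2 : (m2 : Matrix (Fin 2) (Fin 2) R2) = M2)
    (j : ℕ) (hj : 2 ≤ j)
    (M : (Matrix (Fin 2) (Fin 2) R2)ˣ)
    (hM : M ∈ lcs (Subgroup.closure {m1, m2}) (j - 1))
    (u : R2ˣ) (l1 l2 : R2)
    (hform : (M : Matrix (Fin 2) (Fin 2) R2) =
      (u : R2) • (1 : Matrix (Fin 2) (Fin 2) R2) + Nmat l1 l2) :
    l1 ∈ Saug ^ (j - 1) ∧ l2 ∈ Saug ^ (j - 1) := by
  obtain ⟨u0, a, b, ha, hb, hMf⟩ := lcs_le m1 m2 h1 h2 (j-1) hM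
  rw [hform] at hMf
  rw [form_eq, form_eq] at hMf
  have e01 : l1 * (1 - Yr) = a * (1 - Yr) := by
    have := congrFun (congrFun hMf 0) 1
    simpa using this
  have e10 : l2 * (1 - Xr) = b * (1 - Xr) := by
    have := congrFun (congrFun hMf 1) 0
    simpa using this
  have hl1 : l1 = a := by
    have hz : (l1 - a) * (1 - Yr) = 0 := by linear_combination e01
    exact sub_eq_zero.mp ((mul_eq_zero.mp hz).resolve_right oneY_ne)
  have hl2 : l2 = b := by
    have hz : (l2 - b) * (1 - Xr) = 0 := by linear_combination e10
    exact sub_eq_zero.mp ((mul_eq_zero.mp hz).resolve_right oneX_ne)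
  exact ⟨hl1 ▸ ha, hl2 ▸ hb⟩


/-- If `M = uI + N` lies in the `j`-th term of the lower central series of `F(ℛ)`
(`j ≥ 2`), then the coefficients `λ₁, λ₂` of `N` lie in `Σ^(j-1)`. -/
theorem lower_central_coefficients
    (m1 m2 : (Matrix (Fin 2) (Fin 2) R2)ˣ)
    (h1 : (m1 : Matrix (Fin 2) (Fin 2) R2) = M1)
    (h2 : (m2 : Matrix (Fin 2) (Fin 2) R2) = M2)
    (j : ℕ) (hj : 2 ≤ j)
    (M : (Matrix (Fin 2) (Fin 2) R2)ˣ)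
    (hM : M ∈ lcs (Subgroup.closure {m1, m2}) (j - 1))
    (u : R2ˣ) (l1 l2 : R2)
    (hform : (M : Matrix (Fin 2) (Fin 2) R2) =
      (u : R2) • (1 : Matrix (Fin 2) (Fin 2) R2) + Nmat l1 l2) :
    l1 ∈ Saug ^ (j - 1) ∧ l2 ∈ Saug ^ (j - 1) :=
  lower_central_coefficients_aux m1 m2 h1 h2 j hj M hM u l1 l2 hform
end
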